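/- Let Φ₁(z,X) be a Jacobi-like form of weight λ₁ for Γ (scalar coefficients) and Φ̂₂(z,X) a vector-valued Jacobi-like form of weight λ₂ with respect to ρ. Then the product Ψ(z,X) = Φ₁(z,−X)·Φ̂₂(z,X) satisfies Ψ(γz, 𝔍(γ,z)^{−2}X) = 𝔍(γ,z)^{λ₁+λ₂} ρ(γ) Ψ(z,X) for all γ ∈ Γ; consequently every coefficient ψ_r of Ψ(z,X) = Σ_r ψ_r(z)X^r is a vector-valued modular form of weight λ₁+λ₂+2r with respect to ρ. -/

import Mathlib

open Matrix Complex Finset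

abbrev SL2R := Matrix.SpecialLinearGroup (Fin 2) ℝ

noncomputable def Jf (γ : SL2R) (z : ℂ) : ℂ := (γ.1 1 0 : ℝ) * z + (γ.1 1 1 : ℝ)

noncomputable def Kf (γ : SL2R) (z : ℂ) : ℂ := (γ.1 1 0 : ℝ) / Jf γ z

noncomputable def actSL (γ : SL2R) (z : ℂ) : ℂ :=
  ((γ.1 0 0 : ℝ) * z + (γ.1 0 1 : ℝ)) / Jf γ z

lemma Jf_ne_zero (γ : SL2R) (z : ℂ) (hz : 0 < z.im) : Jf γ z ≠ 0 := by
  intro h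
  have hc : (γ.1 1 0 : ℝ) = 0 := by
    have him := congrArg Complex.im h
    simp [Jf, Complex.add_im, Complex.mul_im] at him
    rcases him with h0 | h0
    · exact h0
    · exact absurd h0 (ne_of_gt hz)
  have hd : (γ.1 1 1 : ℝ) = 0 := by
    rw [Jf, hc] at h
    simpa using h
  have hdet := γ.2
  rw [Matrix.det_fin_two] at hdet
  rw [hc, hd] at hdet
  simp at hdet

lemma rescale_C' (a c : ℂ) :
    PowerSeries.rescale a (PowerSeries.C c) = PowerSeries.C c := by
  ext n
  cases n <;> simp [PowerSeries.coeff_rescale, PowerSeries.coeff_C]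

lemma series_eq (J K : ℂ) (l : ℤ) (f g : ℕ → ℂ)
    (h : ∀ m : ℕ, J ^ (-(2 * m : ℤ)) * f m =
      J ^ l * ∑ j ∈ Finset.range (m + 1), K ^ (m - j) / ((m - j).factorial : ℂ) * g j) :
    PowerSeries.rescale (J ^ (-2 : ℤ)) (PowerSeries.mk f) =
      PowerSeries.C (J ^ l) *
        (PowerSeries.rescale K (PowerSeries.exp ℂ) * PowerSeries.mk g) := by
  ext m
  rw [PowerSeries.coeff_rescale, PowerSeries.coeff_mk, PowerSeries.coeff_C_mul,
    PowerSeries.coeff_mul, Finset.Nat.sum_antidiagonal_eq_sum_range_succ_mk]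
  have h1 : (J ^ (-2 : ℤ)) ^ m = J ^ (-(2 * m : ℤ)) := by
    rw [← zpow_natCast (J ^ (-2 : ℤ)) m, ← _root_.zpow_mul]
    norm_num
  rw [h1, h m]
  congr 1
  rw [← Finset.sum_range_reflect (fun j => K ^ (m - j) / ((m - j).factorial : ℂ) * g j) (m + 1)]
  refine Finset.sum_congr rfl fun j hj => ?_
  have hj' : j ≤ m := Nat.lt_succ_iff.mp (Finset.mem_range.mp hj)
  simp only [Nat.add_sub_cancel, Nat.sub_sub_self hj', PowerSeries.coeff_rescale,
    PowerSeries.coeff_exp, PowerSeries.coeff_mk]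
  push_cast
  ring

/-- Product of a scalar Jacobi-like form of weight λ₁ (with X ↦ −X) and a
vector-valued Jacobi-like form of weight λ₂ w.r.t. ρ: every coefficient ψ_r of
Ψ(z,X) = Φ₁(z,−X)·Φ̂₂(z,X) = Σ_r ψ_r(z) X^r is a vector-valued modular form of
weight λ₁+λ₂+2r with respect to ρ.  Jacobi-like forms are encoded
coefficientwise: Φ(γz, 𝔍^{−2}X) = 𝔍^λ e^{𝔎X} (ρ(γ)) Φ(z,X). -/
theorem jacobi_like_product_coefficients (N : ℕ) (Γ : Subgroup SL2R)
    (ρ : SL2R → Matrix (Fin (N + 1)) (Fin (N + 1)) ℂ)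
    (l₁ l₂ : ℤ) (φ : ℕ → ℂ → ℂ) (ψ : ℕ → ℂ → Fin (N + 1) → ℂ)
    (hφd : ∀ i, DifferentiableOn ℂ (φ i) {z : ℂ | 0 < z.im})
    (hψd : ∀ i, DifferentiableOn ℂ (ψ i) {z : ℂ | 0 < z.im})
    -- Φ₁(z,X) = Σ_i φ_i(z) X^i is a Jacobi-like form of weight λ₁ (coefficientwise):
    (hΦ₁ : ∀ γ ∈ Γ, ∀ z : ℂ, 0 < z.im → ∀ m : ℕ,
      Jf γ z ^ (-(2 * m : ℤ)) * φ m (actSL γ z) =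
        Jf γ z ^ l₁ * ∑ j ∈ Finset.range (m + 1),
          Kf γ z ^ (m - j) / ((m - j).factorial : ℂ) * φ j z)
    -- Φ̂₂(z,X) = Σ_i ψ_i(z) X^i is a vector-valued Jacobi-like form of weight λ₂ w.r.t. ρ:
    (hΦ₂ : ∀ γ ∈ Γ, ∀ z : ℂ, 0 < z.im → ∀ m : ℕ,
      Jf γ z ^ (-(2 * m : ℤ)) • ψ m (actSL γ z) =
        Jf γ z ^ l₂ • ∑ j ∈ Finset.range (m + 1),
          (Kf γ z ^ (m - j) / ((m - j).factorial : ℂ)) • (ρ γ *ᵥ ψ j z)) :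
    -- then each coefficient ψΨ_r = Σ_{i+j=r} (−1)^i φ_i ψ_j of Ψ(z,X) = Φ₁(z,−X)Φ̂₂(z,X)
    -- is a vector-valued modular form of weight λ₁+λ₂+2r with respect to ρ:
    ∀ r : ℕ, ∀ γ ∈ Γ, ∀ z : ℂ, 0 < z.im →
      (fun i => ∑ s ∈ Finset.range (r + 1), (-1 : ℂ) ^ s * φ s (actSL γ z) *
          ψ (r - s) (actSL γ z) i) =
        Jf γ z ^ (l₁ + l₂ + 2 * r) •
          (ρ γ *ᵥ fun i => ∑ s ∈ Finset.range (r + 1), (-1 : ℂ) ^ s * φ s z * ψ (r - s) z i) := by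
  intro r γ hγ z hz
  have hJ : Jf γ z ≠ 0 := Jf_ne_zero γ z hz
  set J := Jf γ z with hJdef
  set K := Kf γ z with hKdef
  set w := actSL γ z with hw
  funext i
  -- scalar form of the vector-valued hypothesis at coordinate i
  have h2 : ∀ m : ℕ, J ^ (-(2 * m : ℤ)) * ψ m w i =
      J ^ l₂ * ∑ j ∈ Finset.range (m + 1),
        K ^ (m - j) / ((m - j).factorial : ℂ) * (ρ γ *ᵥ ψ j z) i := by
    intro m
    have := congrFun (hΦ₂ γ hγ z hz m) i
    simpa [Finset.sum_apply, Pi.smul_apply, smul_eq_mul] using this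
  have hF := series_eq J K l₁ (fun m => φ m w) (fun m => φ m z) (hΦ₁ γ hγ z hz)
  have hG := series_eq J K l₂ (fun m => ψ m w i) (fun m => (ρ γ *ᵥ ψ m z) i) h2
  have hexp : PowerSeries.rescale (K * -1) (PowerSeries.exp ℂ) *
      PowerSeries.rescale K (PowerSeries.exp ℂ) = 1 := by
    rw [PowerSeries.exp_mul_exp_eq_exp_add]
    norm_num [PowerSeries.rescale_zero]
  have key : PowerSeries.rescale (J ^ (-2 : ℤ))
      (PowerSeries.rescale (-1) (PowerSeries.mk fun m => φ m w) *
        PowerSeries.mk fun m => ψ m w i)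
      = PowerSeries.C (J ^ (l₁ + l₂)) *
        (PowerSeries.rescale (-1) (PowerSeries.mk fun m => φ m z) *
          PowerSeries.mk fun m => (ρ γ *ᵥ ψ m z) i) := by
    rw [_root_.map_mul, PowerSeries.rescale_rescale, mul_comm (-1 : ℂ),
      ← PowerSeries.rescale_rescale, hF, hG, _root_.map_mul, _root_.map_mul, rescale_C',
      PowerSeries.rescale_rescale]
    rw [show J ^ (l₁ + l₂) = J ^ l₁ * J ^ l₂ from zpow_add₀ hJ l₁ l₂, _root_.map_mul]
    linear_combination (PowerSeries.C (J ^ l₁) * PowerSeries.C (J ^ l₂) *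
      PowerSeries.rescale (-1) (PowerSeries.mk fun m => φ m z) *
      PowerSeries.mk fun m => (ρ γ *ᵥ ψ m z) i) * hexp
  have hco := congrArg (PowerSeries.coeff r) key
  rw [PowerSeries.coeff_rescale, PowerSeries.coeff_C_mul, PowerSeries.coeff_mul,
    PowerSeries.coeff_mul, Finset.Nat.sum_antidiagonal_eq_sum_range_succ_mk,
    Finset.Nat.sum_antidiagonal_eq_sum_range_succ_mk] at hco
  simp only [PowerSeries.coeff_rescale, PowerSeries.coeff_mk] at hco
  -- rewrite the goal's RHS
  have hv : (ρ γ *ᵥ fun k => ∑ s ∈ Finset.range (r + 1),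
        (-1 : ℂ) ^ s * φ s z * ψ (r - s) z k) i
      = ∑ s ∈ Finset.range (r + 1), (-1 : ℂ) ^ s * φ s z * (ρ γ *ᵥ ψ (r - s) z) i := by
    simp only [Matrix.mulVec, dotProduct, Finset.mul_sum]
    rw [Finset.sum_comm]
    refine Finset.sum_congr rfl fun s _ => ?_
    exact Finset.sum_congr rfl fun k _ => by ring
  rw [Pi.smul_apply, smul_eq_mul, hv]
  have hpow : (J ^ (-2 : ℤ)) ^ r = (J ^ (2 * r : ℤ))⁻¹ := by
    rw [← zpow_natCast (J ^ (-2 : ℤ)) r, ← _root_.zpow_mul, ← _root_.zpow_neg]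
    congr 1
  have hJ2 : J ^ (2 * r : ℤ) ≠ 0 := zpow_ne_zero _ hJ
  rw [hpow] at hco
  rw [show (l₁ + l₂ + 2 * r : ℤ) = (l₁ + l₂) + 2 * r by ring, zpow_add₀ hJ]
  field_simp at hco
  linear_combination hco
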